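/- Tail bound for the large-ℓ part of the partition function: for κ > -1, γ > 0 with κ+2 > γ, set L̃ = L^{1 − γ/(2(κ+2))}. For ℓ ≥ L̃ and N ≤ CL, using A_ℓ(n) ≤ φ^{-n} z_κ(φ)^ℓ with φ = exp(−ℓ/(L log L)) and z_κ(φ) ≤ C_κ (1−φ)^{−(κ+1)}, one obtains Σ_{n=0}^N A_ℓ(n) ≤ C_κ^ℓ (L log L / ℓ)^{(κ+1)ℓ} e^{ρℓ/log L}·(N+1); combined with binom(L,ℓ) ≤ (eL/ℓ)^ℓ, there exists ε ∈ (0, γ/4) such that for L large enough Σ_{ℓ ≥ L̃}^L binom(L,ℓ) (θ^ℓ/L^{ℓγ}) Σ_{n=0}^N A_ℓ(n) ≤ Σ_{ℓ ≥ L̃}^L L^{(−γ/2 + ε)ℓ} → 0 as L → ∞. -/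

import Mathlib

open Real Filter Finset

/-- Sum over compositions of `n` into `ℓ` nonnegative parts of `Π (n_y+1)^κ`. -/
noncomputable def Acomp (κ : ℝ) (ℓ n : ℕ) : ℝ :=
  ∑ x ∈ Finset.Nat.antidiagonalTuple ℓ n, ∏ y : Fin ℓ, ((x y : ℝ) + 1) ^ κ

/-- Tail (large `ℓ`) part of the partition function expansion, with cut-off
`L̃ = L^{1−γ/(2(κ+2))}`. -/
noncomputable def tailSum (κ γ θ : ℝ) (N : ℕ → ℕ) (L : ℕ) : ℝ :=
  ∑ ℓ ∈ Finset.Icc ⌈(L : ℝ) ^ (1 - γ / (2 * (κ + 2)))⌉₊ L,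
    (Nat.choose L ℓ : ℝ) * (θ ^ ℓ / (L : ℝ) ^ (ℓ * γ)) *
      ∑ n ∈ Finset.range (N L + 1), Acomp κ ℓ n

noncomputable def zf (κ φ : ℝ) (m : ℕ) : ℝ := ((m : ℝ) + 1) ^ κ * φ ^ m

lemma zf_nonneg (κ : ℝ) {φ : ℝ} (h0 : 0 ≤ φ) (m : ℕ) : 0 ≤ zf κ φ m :=
  mul_nonneg (rpow_nonneg (by positivity) _) (pow_nonneg h0 _)

lemma summable_zf (κ : ℝ) {φ : ℝ} (h0 : 0 < φ) (h1 : φ < 1) : Summable (zf κ φ) := by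
  set k : ℕ := ⌈κ⌉₊ + 1
  have hs : Summable (fun m : ℕ => ((m : ℝ)) ^ k * φ ^ m) := by
    have := summable_pow_mul_geometric_of_norm_lt_one (R := ℝ) k
      (r := φ) (by rw [Real.norm_eq_abs, abs_of_nonneg h0.le]; exact h1)
    exact this
  have hs' : Summable (fun m : ℕ => ((m : ℝ) + 1) ^ k * φ ^ (m + 1)) := by
    have := (summable_nat_add_iff (f := fun m : ℕ => ((m : ℝ)) ^ k * φ ^ m) 1).2 hs
    simpa using this
  have hs'' : Summable (fun m : ℕ => φ⁻¹ * (((m : ℝ) + 1) ^ k * φ ^ (m + 1))) := hs'.mul_left _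
  refine Summable.of_nonneg_of_le (zf_nonneg κ h0.le) (fun m => ?_) hs''
  have h1m : (1 : ℝ) ≤ (m : ℝ) + 1 := by exact_mod_cast Nat.le_add_left 1 m
  have : ((m : ℝ) + 1) ^ κ ≤ ((m : ℝ) + 1) ^ k := by
    rw [← Real.rpow_natCast ((m : ℝ) + 1) k]
    apply Real.rpow_le_rpow_of_exponent_le h1m
    calc κ ≤ ⌈κ⌉₊ := Nat.le_ceil κ
    _ ≤ (k : ℝ) := by push_cast [k]; linarith
  calc zf κ φ m ≤ ((m : ℝ) + 1) ^ k * φ ^ m := by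
        exact mul_le_mul_of_nonneg_right this (pow_nonneg h0.le _)
    _ = φ⁻¹ * (((m : ℝ) + 1) ^ k * φ ^ (m + 1)) := by
        field_simp [pow_succ]; ring

lemma rpow_le_exp_aux {κ t : ℝ} (hκ : 0 ≤ κ) (ht : 0 < t) : t ^ κ ≤ κ ^ κ * Real.exp t := by
  rcases eq_or_lt_of_le hκ with h | h
  · simp [← h, Real.rpow_zero]
    linarith [Real.one_le_exp ht.le]
  · have hl : Real.log (t / κ) ≤ t / κ - 1 := Real.log_le_sub_one_of_pos (by positivity)
    rw [Real.log_div ht.ne' h.ne'] at hl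
    have : κ * Real.log t ≤ κ * Real.log κ + t := by
      have := mul_le_mul_of_nonneg_left hl hκ
      rw [mul_sub] at this
      have ht' : κ * (t / κ) = t := by field_simp
      nlinarith
    calc t ^ κ = Real.exp (Real.log t * κ) := by
          rw [Real.rpow_def_of_pos ht]
      _ ≤ Real.exp (Real.log κ * κ + t) := by
          apply Real.exp_le_exp.2; nlinarith
      _ = κ ^ κ * Real.exp t := by
          rw [Real.exp_add, Real.rpow_def_of_pos h]

lemma z_bound_pos {κ φ : ℝ} (hκ : 0 ≤ κ) (hφ2 : 1/2 ≤ φ) (hφ1 : φ < 1) :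
    ∑' m, zf κ φ m ≤ 4 * (2*κ) ^ κ * (1-φ) ^ (-(κ+1)) := by
  have h0 : 0 < φ := by linarith
  set lam : ℝ := -Real.log φ with hlam
  have hL : 0 < lam := by
    have := Real.log_neg h0 hφ1; simp [hlam]; linarith
  set q : ℝ := Real.exp (-(lam/2)) with hqdef
  have hq0 : 0 < q := Real.exp_pos _
  have hq1 : q < 1 := Real.exp_lt_one_iff.2 (by linarith)
  have hq2 : q ^ 2 = φ := by
    rw [hqdef, ← Real.exp_nat_mul]
    have : (2:ℝ) * (-(lam/2)) = Real.log φ := by rw [hlam]; ring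
    rw [show ((2:ℕ):ℝ) * (-(lam/2)) = (2:ℝ) * (-(lam/2)) by norm_num, this, Real.exp_log h0]
  have hqφ : ∀ m : ℕ, φ ^ m = q ^ m * q ^ m := by
    intro m; rw [← hq2]; ring
  have key : ∀ m : ℕ, zf κ φ m ≤ 2 * ((2*κ) ^ κ * lam ^ (-κ)) * q ^ (m+1) := by
    intro m
    have hm1 : (0:ℝ) < (m:ℝ) + 1 := by positivity
    have hphi : φ ^ m ≤ 2 * φ ^ (m+1) := by
      have : φ ^ (m+1) = φ * φ ^ m := by ring
      rw [this]
      have : (1:ℝ) * φ ^ m ≤ (2 * φ) * φ ^ m := by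
        apply mul_le_mul_of_nonneg_right (by linarith) (pow_nonneg h0.le m)
      linarith [this]
    set t : ℝ := lam/2 * ((m:ℝ)+1) with htdef
    have ht : 0 < t := by positivity
    have hφm1 : φ ^ (m+1) = Real.exp (-t) * q ^ (m+1) := by
      rw [hqdef, ← Real.exp_nat_mul, ← Real.exp_add]
      have : φ = Real.exp (-lam) := by rw [hlam, neg_neg, Real.exp_log h0]
      rw [this, ← Real.exp_nat_mul]
      congr 1
      push_cast [htdef]
      ring
    have hmt : ((m:ℝ)+1) ^ κ ≤ (2/lam) ^ κ * (κ ^ κ * Real.exp t) := by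
      have hrepr : (m:ℝ)+1 = 2/lam * t := by rw [htdef]; field_simp
      rw [hrepr, Real.mul_rpow (by positivity) ht.le]
      exact mul_le_mul_of_nonneg_left (rpow_le_exp_aux hκ ht) (by positivity)
    have hcomb : ((m:ℝ)+1) ^ κ * φ ^ (m+1) ≤ (2*κ) ^ κ * lam ^ (-κ) * q ^ (m+1) := by
      rw [hφm1]
      calc ((m:ℝ)+1) ^ κ * (Real.exp (-t) * q ^ (m+1))
          ≤ ((2/lam) ^ κ * (κ ^ κ * Real.exp t)) * (Real.exp (-t) * q ^ (m+1)) := by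
            apply mul_le_mul_of_nonneg_right hmt (by positivity)
        _ = ((2/lam) ^ κ * κ ^ κ) * (Real.exp t * Real.exp (-t)) * q ^ (m+1) := by ring
        _ = (2*κ) ^ κ * lam ^ (-κ) * q ^ (m+1) := by
            rw [← Real.exp_add, add_neg_cancel, Real.exp_zero,
              Real.mul_rpow (by norm_num : (0:ℝ) ≤ 2) hκ, Real.rpow_neg hL.le,
              Real.div_rpow (by norm_num : (0:ℝ) ≤ 2) hL.le, div_eq_mul_inv]
            ring
    calc zf κ φ m = ((m:ℝ)+1) ^ κ * φ ^ m := rfl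
      _ ≤ ((m:ℝ)+1) ^ κ * (2 * φ ^ (m+1)) := by
          apply mul_le_mul_of_nonneg_left hphi (by positivity)
      _ = 2 * (((m:ℝ)+1) ^ κ * φ ^ (m+1)) := by ring
      _ ≤ 2 * ((2*κ) ^ κ * lam ^ (-κ) * q ^ (m+1)) := by linarith [hcomb]
      _ = 2 * ((2*κ) ^ κ * lam ^ (-κ)) * q ^ (m+1) := by ring
  have hgeo : Summable (fun m : ℕ => q ^ (m+1)) := by
    have := summable_geometric_of_lt_one hq0.le hq1
    exact (summable_nat_add_iff 1).2 this
  have hsum := summable_zf κ h0 hφ1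
  have htsum : ∑' m, zf κ φ m ≤ 2 * ((2*κ) ^ κ * lam ^ (-κ)) * ∑' m : ℕ, q ^ (m+1) := by
    rw [← tsum_mul_left]
    exact Summable.tsum_le_tsum key hsum (hgeo.mul_left _)
  have hgeosum : ∑' m : ℕ, q ^ (m+1) ≤ 1 / (1-q) := by
    have h1 : ∑' m : ℕ, q ^ (m+1) = q * ∑' m : ℕ, q ^ m := by
      rw [← tsum_mul_left]; congr 1; funext m; ring
    rw [h1, tsum_geometric_of_lt_one hq0.le hq1]
    have := mul_le_mul_of_nonneg_right hq1.le (le_of_lt (inv_pos.2 (by linarith : (0:ℝ) < 1 - q)))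
    calc q * (1-q)⁻¹ ≤ 1 * (1-q)⁻¹ := this
      _ = 1 / (1-q) := by rw [one_mul, one_div]
  have h1q : 1 - φ ≤ 2 * (1 - q) := by nlinarith [hq2]
  have h1φ : 0 < 1 - φ := by linarith
  have hfrac : 1 / (1-q) ≤ 2 * (1-φ)⁻¹ := by
    calc 1 / (1-q) ≤ 1 / ((1-φ)/2) := one_div_le_one_div_of_le (by linarith) (by linarith)
      _ = 2 * (1-φ)⁻¹ := by rw [one_div, inv_div, div_eq_mul_inv]
  have hlamφ : lam ^ (-κ) ≤ (1-φ) ^ (-κ) := by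
    apply Real.rpow_le_rpow_of_nonpos h1φ _ (by linarith)
    have := Real.log_le_sub_one_of_pos h0
    rw [hlam]; linarith
  have hCnn : (0:ℝ) ≤ (2*κ) ^ κ := Real.rpow_nonneg (by linarith) _
  calc ∑' m, zf κ φ m ≤ 2 * ((2*κ) ^ κ * lam ^ (-κ)) * (1 / (1-q)) := by
        apply le_trans htsum
        apply mul_le_mul_of_nonneg_left hgeosum
        have : (0:ℝ) ≤ lam ^ (-κ) := Real.rpow_nonneg hL.le _
        positivity
    _ ≤ 2 * ((2*κ) ^ κ * (1-φ) ^ (-κ)) * (2 * (1-φ)⁻¹) := by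
        apply mul_le_mul
        · apply mul_le_mul_of_nonneg_left _ (by norm_num)
          exact mul_le_mul_of_nonneg_left hlamφ hCnn
        · exact hfrac
        · have : (0:ℝ) < 1 - q := by linarith
          positivity
        · have : (0:ℝ) ≤ (1-φ) ^ (-κ) := Real.rpow_nonneg h1φ.le _
          positivity
    _ = 4 * (2*κ) ^ κ * ((1-φ) ^ (-κ) * (1-φ)⁻¹) := by ring
    _ = 4 * (2*κ) ^ κ * (1-φ) ^ (-(κ+1)) := by
        rw [← Real.rpow_neg_one (1-φ), ← Real.rpow_add h1φ]
        ring_nf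

noncomputable def zC (κ : ℝ) : ℝ := max (4 * (2*κ) ^ κ) (16 / (κ+1))

lemma zC_pos {κ : ℝ} (hκ : -1 < κ) : 0 < zC κ :=
  lt_max_of_lt_right (div_pos (by norm_num) (by linarith))

lemma z_bound {κ : ℝ} (hκ : -1 < κ) {φ : ℝ} (hφ2 : 1/2 ≤ φ) (hφ1 : φ < 1) :
    ∑' m, zf κ φ m ≤ zC κ * (1-φ) ^ (-(κ+1)) := by
  have h0 : (0:ℝ) < φ := by linarith
  have h1φ : 0 < 1 - φ := by linarith
  have hbnn : (0:ℝ) ≤ (1-φ) ^ (-(κ+1)) := Real.rpow_nonneg h1φ.le _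
  rcases le_or_gt 0 κ with hk0 | hk0
  · exact le_trans (z_bound_pos hk0 hφ2 hφ1)
      (mul_le_mul_of_nonneg_right (le_max_left _ _) hbnn)
  · -- negative case
    set p : ℝ := κ + 1 with hp
    have hp0 : 0 < p := by linarith
    have hp1 : p ≤ 1 := by linarith
    -- pointwise : (m+1)^κ ≤ (1/p) * ((m+1)^p - m^p)
    have hpoint : ∀ m : ℕ, ((m:ℝ)+1) ^ κ ≤ (1/p) * (((m:ℝ)+1) ^ p - ((m:ℝ)) ^ p) := by
      intro m
      have hm1 : (0:ℝ) < (m:ℝ) + 1 := by positivity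
      have hs : (-1:ℝ) ≤ -(1/((m:ℝ)+1)) := by
        rw [neg_le_neg_iff]
        rw [div_le_one hm1]
        exact by push_cast; linarith [Nat.cast_nonneg (α := ℝ) m]
      have hB := rpow_one_add_le_one_add_mul_self hs hp0.le hp1
      -- (1 + s)^p ≤ 1 + p * s with s = -(1/(m+1))
      have hone : (1:ℝ) + -(1/((m:ℝ)+1)) = (m:ℝ)/((m:ℝ)+1) := by
        field_simp
        ring
      rw [hone] at hB
      have hmul := mul_le_mul_of_nonneg_right hB (Real.rpow_nonneg hm1.le p)
      have hleft : ((m:ℝ)/((m:ℝ)+1)) ^ p * ((m:ℝ)+1) ^ p = ((m:ℝ)) ^ p := by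
        rw [← Real.mul_rpow (by positivity) hm1.le]
        congr 1
        field_simp
      rw [hleft] at hmul
      -- hmul : m^p ≤ (1 + p * (-(1/(m+1)))) * (m+1)^p
      have hexp : (1 + p * -(1/((m:ℝ)+1))) * ((m:ℝ)+1) ^ p
          = ((m:ℝ)+1) ^ p - p * ((m:ℝ)+1) ^ κ := by
        have h1 : ((m:ℝ)+1) ^ p = ((m:ℝ)+1) ^ κ * ((m:ℝ)+1) := by
          rw [← Real.rpow_add_one hm1.ne' κ]
        rw [h1]
        field_simp
        ring
      rw [hexp] at hmul
      rw [← sub_nonneg]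
      have heq : (1/p) * (((m:ℝ)+1) ^ p - ((m:ℝ)) ^ p) - ((m:ℝ)+1) ^ κ
          = (1/p) * ((((m:ℝ)+1) ^ p - p * ((m:ℝ)+1) ^ κ) - ((m:ℝ)) ^ p) := by
        field_simp
        ring
      rw [heq]
      apply mul_nonneg (by positivity)
      linarith
    -- summability of (m+1)^p φ^m and m^p φ^m
    have hsump : Summable (zf p φ) := summable_zf p h0 hφ1
    have hsump' : Summable (fun m : ℕ => ((m:ℝ)) ^ p * φ ^ m) := by
      apply Summable.of_nonneg_of_le
        (fun m => mul_nonneg (Real.rpow_nonneg (Nat.cast_nonneg m) _) (pow_nonneg h0.le m))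
        (fun m => ?_) hsump
      apply mul_le_mul_of_nonneg_right _ (pow_nonneg h0.le m)
      apply Real.rpow_le_rpow (Nat.cast_nonneg m) (by linarith) hp0.le
    -- tsum of m^p φ^m = φ * tsum zf p φ
    have hshift : ∑' m : ℕ, ((m:ℝ)) ^ p * φ ^ m = φ * ∑' m, zf p φ m := by
      rw [Summable.tsum_eq_zero_add hsump']
      simp only [Nat.cast_zero, Real.zero_rpow hp0.ne', zero_mul, zero_add, pow_zero]
      rw [← tsum_mul_left]
      congr 1; funext m
      push_cast
      rw [zf]
      ring
    have hzf_le : ∀ m, zf κ φ m ≤ (1/p) * (zf p φ m - ((m:ℝ)) ^ p * φ ^ m) := by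
      intro m
      have := mul_le_mul_of_nonneg_right (hpoint m) (pow_nonneg h0.le m)
      calc zf κ φ m ≤ ((1/p) * (((m:ℝ)+1) ^ p - ((m:ℝ)) ^ p)) * φ ^ m := this
        _ = (1/p) * (zf p φ m - ((m:ℝ)) ^ p * φ ^ m) := by rw [zf]; ring
    have hsumdiff : Summable (fun m : ℕ => (1/p) * (zf p φ m - ((m:ℝ)) ^ p * φ ^ m)) :=
      ((hsump.sub hsump').mul_left _)
    have hκsum : Summable (zf κ φ) := summable_zf κ h0 hφ1
    have hmain : ∑' m, zf κ φ m ≤ (1/p) * ((1-φ) * ∑' m, zf p φ m) := by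
      calc ∑' m, zf κ φ m ≤ ∑' m, (1/p) * (zf p φ m - ((m:ℝ)) ^ p * φ ^ m) :=
            Summable.tsum_le_tsum hzf_le hκsum hsumdiff
        _ = (1/p) * (∑' m, zf p φ m - ∑' m : ℕ, ((m:ℝ)) ^ p * φ ^ m) := by
            rw [tsum_mul_left, Summable.tsum_sub hsump hsump']
        _ = (1/p) * ((1-φ) * ∑' m, zf p φ m) := by rw [hshift]; ring
    -- z_bound_pos for p
    have hzb := z_bound_pos hp0.le hφ2 hφ1
    have hztotnn : 0 ≤ ∑' m, zf p φ m := tsum_nonneg (zf_nonneg p h0.le)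
    have h2p : (2*p) ^ p ≤ 2 := by
      calc (2*p) ^ p ≤ (2*1) ^ p := by
            apply Real.rpow_le_rpow (by positivity) (by linarith) hp0.le
        _ = 2 ^ p := by norm_num
        _ ≤ 2 ^ (1:ℝ) := Real.rpow_le_rpow_of_exponent_le (by norm_num) hp1
        _ = 2 := Real.rpow_one 2
    have hbig : (1-φ) ^ (-(p+1)) = (1-φ)⁻¹ * (1-φ) ^ (-(κ+1)) := by
      rw [← Real.rpow_neg_one (1-φ), ← Real.rpow_add h1φ]
      congr 1; rw [hp]; ring
    calc ∑' m, zf κ φ m ≤ (1/p) * ((1-φ) * ∑' m, zf p φ m) := hmain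
      _ ≤ (1/p) * ((1-φ) * (4 * (2*p) ^ p * (1-φ) ^ (-(p+1)))) := by
          apply mul_le_mul_of_nonneg_left _ (by positivity)
          exact mul_le_mul_of_nonneg_left hzb h1φ.le
      _ = (4 * (2*p) ^ p / p) * ((1-φ) * (1-φ)⁻¹) * (1-φ) ^ (-(κ+1)) := by
          rw [hbig]; ring
      _ = (4 * (2*p) ^ p / p) * (1-φ) ^ (-(κ+1)) := by
          rw [mul_inv_cancel₀ h1φ.ne', mul_one]
      _ ≤ (16 / (κ+1)) * (1-φ) ^ (-(κ+1)) := by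
          apply mul_le_mul_of_nonneg_right _ hbnn
          rw [div_le_div_iff₀ hp0 (by linarith : (0:ℝ) < κ+1)]
          have h2pnn : (0:ℝ) ≤ (2*p) ^ p := Real.rpow_nonneg (by positivity) p
          nlinarith
      _ ≤ zC κ * (1-φ) ^ (-(κ+1)) := by
          apply mul_le_mul_of_nonneg_right (le_max_right _ _) hbnn

lemma Acomp_nonneg (κ : ℝ) (ℓ n : ℕ) : 0 ≤ Acomp κ ℓ n := by
  apply Finset.sum_nonneg
  intro x _
  apply Finset.prod_nonneg
  intro y _
  positivity

lemma sumA_le (κ : ℝ) (ℓ N : ℕ) {φ : ℝ} (h0 : 0 ≤ φ) :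
    ∑ n ∈ range (N+1), Acomp κ ℓ n * φ ^ n ≤ (∑ m ∈ range (N+1), zf κ φ m) ^ ℓ := by
  have step1 : ∀ n ∈ range (N+1), Acomp κ ℓ n * φ ^ n
      = ∑ x ∈ Finset.Nat.antidiagonalTuple ℓ n, ∏ y : Fin ℓ, zf κ φ (x y) := by
    intro n _
    rw [Acomp, Finset.sum_mul]
    apply Finset.sum_congr rfl
    intro x hx
    have hsum : ∑ y : Fin ℓ, x y = n := (Finset.Nat.mem_antidiagonalTuple).1 hx
    have hφ : φ ^ n = ∏ y : Fin ℓ, φ ^ (x y) := by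
      rw [Finset.prod_pow_eq_pow_sum, hsum]
    rw [hφ, ← Finset.prod_mul_distrib]
    rfl
  rw [Finset.sum_congr rfl step1]
  have hdisj : (↑(range (N+1)) : Set ℕ).PairwiseDisjoint
      (fun n => Finset.Nat.antidiagonalTuple ℓ n) := by
    intro a _ b _ hab
    apply Finset.disjoint_left.2
    intro x hxa hxb
    exact hab ((Finset.Nat.mem_antidiagonalTuple.1 hxa).symm.trans
      (Finset.Nat.mem_antidiagonalTuple.1 hxb))
  rw [← Finset.sum_biUnion hdisj]
  have hsubset : (range (N+1)).biUnion (fun n => Finset.Nat.antidiagonalTuple ℓ n)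
      ⊆ Fintype.piFinset (fun _ : Fin ℓ => range (N+1)) := by
    intro x hx
    rw [Finset.mem_biUnion] at hx
    obtain ⟨n, hn, hxn⟩ := hx
    rw [Fintype.mem_piFinset]
    intro y
    rw [Finset.mem_range] at hn ⊢
    have hsum : ∑ z : Fin ℓ, x z = n := Finset.Nat.mem_antidiagonalTuple.1 hxn
    have : x y ≤ n := hsum ▸ Finset.single_le_sum (f := fun z => x z)
      (fun _ _ => Nat.zero_le _) (Finset.mem_univ y)
    omega
  calc ∑ x ∈ (range (N+1)).biUnion (fun n => Finset.Nat.antidiagonalTuple ℓ n),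
        ∏ y : Fin ℓ, zf κ φ (x y)
      ≤ ∑ x ∈ Fintype.piFinset (fun _ : Fin ℓ => range (N+1)), ∏ y : Fin ℓ, zf κ φ (x y) := by
        apply Finset.sum_le_sum_of_subset_of_nonneg hsubset
        intro x _ _
        exact Finset.prod_nonneg fun y _ => zf_nonneg κ h0 (x y)
    _ = ∏ _y : Fin ℓ, ∑ m ∈ range (N+1), zf κ φ m := (Finset.prod_univ_sum _ _).symm
    _ = (∑ m ∈ range (N+1), zf κ φ m) ^ ℓ := by
        rw [Finset.prod_const, Finset.card_univ, Fintype.card_fin]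

lemma core_bound (κ C : ℝ) (hκ : -1 < κ) (hC : 0 < C) {NL L ℓ : ℕ}
    (hNL : (NL : ℝ) ≤ C * L) (hL : 2 ≤ Real.log L) (hL1 : 1 ≤ L)
    (hℓ1 : 1 ≤ ℓ) (hℓL : ℓ ≤ L) :
    ∑ n ∈ range (NL + 1), Acomp κ ℓ n
      ≤ (zC κ * 2 ^ (κ+1) * ((L:ℝ) * Real.log L / ℓ) ^ (κ+1)) ^ ℓ
          * Real.exp (C * ℓ / Real.log L) := by
  have hlog : (0:ℝ) < Real.log L := by linarith
  have hLpos : (0:ℝ) < (L:ℝ) := by exact_mod_cast hL1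
  have hℓpos : (0:ℝ) < (ℓ:ℝ) := by exact_mod_cast hℓ1
  have hℓLr : (ℓ:ℝ) ≤ (L:ℝ) := by exact_mod_cast hℓL
  set lam : ℝ := (ℓ:ℝ) / ((L:ℝ) * Real.log L) with hlamdef
  have hlam0 : 0 < lam := by positivity
  have hlam1 : lam ≤ 1/2 := by
    rw [hlamdef, div_le_iff₀ (by positivity)]
    nlinarith
  set φ : ℝ := Real.exp (-lam) with hφdef
  have h0 : 0 < φ := Real.exp_pos _
  have hφ1 : φ < 1 := Real.exp_lt_one_iff.2 (by linarith)
  have hφ2 : 1/2 ≤ φ := by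
    have := Real.add_one_le_exp (-lam)
    rw [hφdef]; linarith
  have h1mφ : lam/2 ≤ 1 - φ := by
    have hexp : 1 + lam ≤ Real.exp lam := by linarith [Real.add_one_le_exp lam]
    have hinv : φ ≤ (1+lam)⁻¹ := by
      rw [hφdef, Real.exp_neg]
      exact inv_anti₀ (by linarith) hexp
    have h2 : (1+lam)⁻¹ ≤ 1 - lam/2 := by
      rw [inv_le_iff_one_le_mul₀ (by linarith)]
      nlinarith
    linarith
  -- step A
  have stepA : ∑ n ∈ range (NL + 1), Acomp κ ℓ n
      ≤ Real.exp (lam * NL) * ∑ n ∈ range (NL + 1), Acomp κ ℓ n * φ ^ n := by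
    rw [Finset.mul_sum]
    apply Finset.sum_le_sum
    intro n hn
    have hnN : (n:ℝ) ≤ (NL:ℝ) := by
      rw [Finset.mem_range] at hn; exact_mod_cast Nat.lt_succ_iff.1 hn
    have hφn : φ ^ n = Real.exp ((n:ℝ) * (-lam)) := by
      rw [hφdef, ← Real.exp_nat_mul]
    have h1 : (1:ℝ) ≤ Real.exp (lam * NL) * φ ^ n := by
      rw [hφn, ← Real.exp_add]
      apply Real.one_le_exp
      nlinarith
    calc Acomp κ ℓ n = Acomp κ ℓ n * 1 := (mul_one _).symm
      _ ≤ Acomp κ ℓ n * (Real.exp (lam * NL) * φ ^ n) :=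
          mul_le_mul_of_nonneg_left h1 (Acomp_nonneg κ ℓ n)
      _ = Real.exp (lam * NL) * (Acomp κ ℓ n * φ ^ n) := by ring
  -- step B
  have hfin_nonneg : 0 ≤ ∑ m ∈ range (NL+1), zf κ φ m :=
    Finset.sum_nonneg fun m _ => zf_nonneg κ h0.le m
  have hztot_nonneg : 0 ≤ ∑' m, zf κ φ m := tsum_nonneg (zf_nonneg κ h0.le)
  have stepB : ∑ n ∈ range (NL + 1), Acomp κ ℓ n * φ ^ n
      ≤ (zC κ * (1-φ) ^ (-(κ+1))) ^ ℓ := by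
    calc ∑ n ∈ range (NL + 1), Acomp κ ℓ n * φ ^ n
        ≤ (∑ m ∈ range (NL+1), zf κ φ m) ^ ℓ := sumA_le κ ℓ NL h0.le
      _ ≤ (∑' m, zf κ φ m) ^ ℓ := by
          apply pow_le_pow_left₀ hfin_nonneg
          exact Summable.sum_le_tsum _ (fun m _ => zf_nonneg κ h0.le m) (summable_zf κ h0 hφ1)
      _ ≤ (zC κ * (1-φ) ^ (-(κ+1))) ^ ℓ :=
          pow_le_pow_left₀ hztot_nonneg (z_bound hκ hφ2 hφ1) ℓ
  -- step C+D : (1-φ)^(-(κ+1)) ≤ 2^(κ+1) * (L log L / ℓ)^(κ+1)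
  have h1φpos : 0 < 1 - φ := by linarith
  have hCD : (1-φ) ^ (-(κ+1)) ≤ 2 ^ (κ+1) * ((L:ℝ) * Real.log L / ℓ) ^ (κ+1) := by
    have hc : (1-φ) ^ (-(κ+1)) ≤ (lam/2) ^ (-(κ+1)) :=
      Real.rpow_le_rpow_of_nonpos (by positivity) h1mφ (by linarith)
    have hd : (lam/2) ^ (-(κ+1)) = 2 ^ (κ+1) * ((L:ℝ) * Real.log L / ℓ) ^ (κ+1) := by
      rw [Real.rpow_neg (by positivity), ← Real.inv_rpow (by positivity)]
      rw [show (lam/2)⁻¹ = 2 * ((L:ℝ) * Real.log L / ℓ) by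
        rw [hlamdef]; field_simp]
      rw [Real.mul_rpow (by norm_num) (by positivity)]
    rw [hd] at hc; exact hc
  -- step E
  have stepE : Real.exp (lam * NL) ≤ Real.exp (C * ℓ / Real.log L) := by
    apply Real.exp_le_exp.2
    have : lam * (C * L) = C * ℓ / Real.log L := by
      rw [hlamdef]; field_simp
    rw [← this]
    apply mul_le_mul_of_nonneg_left hNL hlam0.le
  -- combine
  have hbase_nonneg : 0 ≤ zC κ * (1-φ) ^ (-(κ+1)) :=
    mul_nonneg (zC_pos hκ).le (Real.rpow_nonneg h1φpos.le _)
  calc ∑ n ∈ range (NL + 1), Acomp κ ℓ n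
      ≤ Real.exp (lam * NL) * ∑ n ∈ range (NL + 1), Acomp κ ℓ n * φ ^ n := stepA
    _ ≤ Real.exp (lam * NL) * (zC κ * (1-φ) ^ (-(κ+1))) ^ ℓ :=
        mul_le_mul_of_nonneg_left stepB (Real.exp_pos _).le
    _ ≤ Real.exp (C * ℓ / Real.log L) * (zC κ * (1-φ) ^ (-(κ+1))) ^ ℓ :=
        mul_le_mul_of_nonneg_right stepE (pow_nonneg hbase_nonneg ℓ)
    _ ≤ Real.exp (C * ℓ / Real.log L)
          * (zC κ * (2 ^ (κ+1) * ((L:ℝ) * Real.log L / ℓ) ^ (κ+1))) ^ ℓ := by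
        apply mul_le_mul_of_nonneg_left _ (Real.exp_pos _).le
        apply pow_le_pow_left₀ hbase_nonneg
        exact mul_le_mul_of_nonneg_left hCD (zC_pos hκ).le
    _ = (zC κ * 2 ^ (κ+1) * ((L:ℝ) * Real.log L / ℓ) ^ (κ+1)) ^ ℓ
          * Real.exp (C * ℓ / Real.log L) := by
        rw [mul_comm]
        congr 1
        ring

lemma choose_le_real {L ℓ : ℕ} (hℓ1 : 1 ≤ ℓ) :
    (L.choose ℓ : ℝ) ≤ ((L:ℝ)/ℓ) ^ ℓ * Real.exp ℓ := by
  have hℓpos : (0:ℝ) < (ℓ:ℝ) := by exact_mod_cast hℓ1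
  have h1 : (L.choose ℓ : ℝ) * (ℓ.factorial : ℝ) ≤ (L:ℝ) ^ ℓ := by
    have : ℓ.factorial * L.choose ℓ ≤ L ^ ℓ := by
      rw [← Nat.descFactorial_eq_factorial_mul_choose]
      exact Nat.descFactorial_le_pow L ℓ
    calc (L.choose ℓ : ℝ) * (ℓ.factorial : ℝ) = ((ℓ.factorial * L.choose ℓ : ℕ) : ℝ) := by
          push_cast; ring
      _ ≤ ((L ^ ℓ : ℕ) : ℝ) := by exact_mod_cast this
      _ = (L:ℝ) ^ ℓ := by push_cast; rfl
  have h2 : ((ℓ:ℝ)) ^ ℓ ≤ Real.exp ℓ * (ℓ.factorial : ℝ) := by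
    have hterm : ((ℓ:ℝ)) ^ ℓ / (ℓ.factorial : ℝ) ≤ Real.exp ℓ := by
      calc ((ℓ:ℝ)) ^ ℓ / (ℓ.factorial : ℝ)
          ≤ ∑ i ∈ range (ℓ+1), ((ℓ:ℝ)) ^ i / (i.factorial : ℝ) := by
            apply Finset.single_le_sum (f := fun i => ((ℓ:ℝ)) ^ i / (i.factorial : ℝ))
              (fun i _ => by positivity) (Finset.self_mem_range_succ ℓ)
        _ ≤ Real.exp ℓ := Real.sum_le_exp_of_nonneg hℓpos.le _
    have hfac : (0:ℝ) < (ℓ.factorial : ℝ) := by exact_mod_cast ℓ.factorial_pos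
    rw [div_le_iff₀ hfac] at hterm
    linarith
  have hfac : (0:ℝ) < (ℓ.factorial : ℝ) := by exact_mod_cast ℓ.factorial_pos
  have hch : (0:ℝ) ≤ (L.choose ℓ : ℝ) := Nat.cast_nonneg _
  rw [div_pow, div_mul_eq_mul_div, le_div_iff₀ (by positivity)]
  calc (L.choose ℓ : ℝ) * (ℓ:ℝ) ^ ℓ ≤ (L.choose ℓ : ℝ) * (Real.exp ℓ * (ℓ.factorial : ℝ)) :=
        mul_le_mul_of_nonneg_left h2 hch
    _ = ((L.choose ℓ : ℝ) * (ℓ.factorial : ℝ)) * Real.exp ℓ := by ring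
    _ ≤ (L:ℝ) ^ ℓ * Real.exp ℓ := mul_le_mul_of_nonneg_right h1 (Real.exp_pos _).le
    _ = (L:ℝ) ^ ℓ * Real.exp ℓ := rfl

lemma log_ge_two {L : ℕ} (hL : 8 ≤ L) : 2 ≤ Real.log L := by
  have hL8 : (8:ℝ) ≤ (L:ℝ) := by exact_mod_cast hL
  rw [Real.le_log_iff_exp_le (by linarith)]
  have he := Real.exp_one_lt_d9
  have : Real.exp 2 = Real.exp 1 * Real.exp 1 := by
    rw [← Real.exp_add]; norm_num
  nlinarith [Real.exp_pos 1]

noncomputable def Kc (κ γ θ C : ℝ) : ℝ :=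
  Real.exp 1 * θ * (zC κ * 2 ^ (κ+1)) * Real.exp C
    * ((γ/(32*(⌈κ+1⌉₊:ℝ)))⁻¹) ^ (⌈κ+1⌉₊)

lemma perterm (κ γ θ C : ℝ)
    (hκ : -1 < κ) (hγ : 0 < γ) (hγκ : γ < κ + 2) (hθ : 0 < θ) (hC : 0 < C)
    (N : ℕ → ℕ) (hN : ∀ L : ℕ, (N L : ℝ) ≤ C * L) {L ℓ : ℕ}
    (h8 : 8 ≤ L) (hK : Kc κ γ θ C ≤ (L:ℝ) ^ (γ/32))
    (hmem : ℓ ∈ Finset.Icc ⌈(L : ℝ) ^ (1 - γ / (2 * (κ + 2)))⌉₊ L) :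
    (L.choose ℓ : ℝ) * (θ ^ ℓ / (L:ℝ) ^ ((ℓ:ℝ) * γ)) * ∑ n ∈ range (N L + 1), Acomp κ ℓ n
      ≤ (L:ℝ) ^ ((-γ/2 + γ/8) * ℓ) := by
  have hκ2 : (0:ℝ) < κ + 2 := by linarith
  set a : ℝ := γ / (2*(κ+2)) with hadef
  have ha0 : 0 < a := by positivity
  have ha1 : a < 1/2 := by
    rw [hadef, div_lt_iff₀ (by positivity)]
    nlinarith
  have hL1 : 1 ≤ L := by omega
  have hLpos : (0:ℝ) < (L:ℝ) := by exact_mod_cast hL1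
  have hL1r : (1:ℝ) ≤ (L:ℝ) := by exact_mod_cast hL1
  have hlog2 : 2 ≤ Real.log L := log_ge_two h8
  have hlogpos : (0:ℝ) < Real.log L := by linarith
  rw [Finset.mem_Icc] at hmem
  obtain ⟨hMℓ, hℓL⟩ := hmem
  have hℓr0 : (L:ℝ) ^ (1-a) ≤ (ℓ:ℝ) := by
    calc (L:ℝ) ^ (1-a) ≤ (⌈(L : ℝ) ^ (1 - a)⌉₊ : ℝ) := Nat.le_ceil _
      _ ≤ (ℓ:ℝ) := by exact_mod_cast hMℓ
  have hpow_pos : (0:ℝ) < (L:ℝ) ^ (1-a) := Real.rpow_pos_of_pos hLpos _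
  have hℓpos : (0:ℝ) < (ℓ:ℝ) := lt_of_lt_of_le hpow_pos hℓr0
  have hℓ1 : 1 ≤ ℓ := by exact_mod_cast hℓpos
  have hℓLr : (ℓ:ℝ) ≤ (L:ℝ) := by exact_mod_cast hℓL
  set D : ℝ := zC κ * 2 ^ (κ+1) with hDdef
  have hD : 0 < D := mul_pos (zC_pos hκ) (Real.rpow_pos_of_pos (by norm_num) _)
  set k : ℕ := ⌈κ+1⌉₊ with hkdef
  have hk1 : 1 ≤ k := Nat.ceil_pos.2 (by linarith)
  have hkr : κ + 1 ≤ (k:ℝ) := Nat.le_ceil _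
  have hkpos : (0:ℝ) < (k:ℝ) := by exact_mod_cast hk1
  set δ : ℝ := γ/(32*(k:ℝ)) with hδdef
  have hδ : 0 < δ := by positivity
  -- the three factors
  have hc1 : (L.choose ℓ : ℝ) ≤ ((L:ℝ)/ℓ * Real.exp 1) ^ ℓ := by
    rw [mul_pow, ← Real.exp_nat_mul, mul_one]
    exact choose_le_real hℓ1
  have hc2 : θ ^ ℓ / (L:ℝ) ^ ((ℓ:ℝ) * γ) = (θ * ((L:ℝ)^γ)⁻¹) ^ ℓ := by
    rw [show (ℓ:ℝ) * γ = γ * (ℓ:ℝ) by ring, Real.rpow_mul hLpos.le,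
      Real.rpow_natCast, ← div_pow, div_eq_mul_inv]
  have hc3 : ∑ n ∈ range (N L + 1), Acomp κ ℓ n
      ≤ (D * ((L:ℝ) * Real.log L / ℓ) ^ (κ+1) * Real.exp C) ^ ℓ := by
    have hcore := core_bound κ C hκ hC (hN L) hlog2 hL1 hℓ1 hℓL
    have hexp : Real.exp (C * ℓ / Real.log L) ≤ (Real.exp C) ^ ℓ := by
      rw [← Real.exp_nat_mul]
      apply Real.exp_le_exp.2
      rw [show C * (ℓ:ℝ) / Real.log L = (ℓ:ℝ) * (C / Real.log L) by ring]
      apply mul_le_mul_of_nonneg_left _ hℓpos.le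
      exact div_le_self hC.le (by linarith)
    have hXnn : (0:ℝ) ≤ ((L:ℝ) * Real.log L / ℓ) ^ (κ+1) :=
      Real.rpow_nonneg (by positivity) _
    calc ∑ n ∈ range (N L + 1), Acomp κ ℓ n
        ≤ (D * ((L:ℝ) * Real.log L / ℓ) ^ (κ+1)) ^ ℓ * Real.exp (C * ℓ / Real.log L) := hcore
      _ ≤ (D * ((L:ℝ) * Real.log L / ℓ) ^ (κ+1)) ^ ℓ * (Real.exp C) ^ ℓ :=
          mul_le_mul_of_nonneg_left hexp (pow_nonneg (by positivity) ℓ)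
      _ = (D * ((L:ℝ) * Real.log L / ℓ) ^ (κ+1) * Real.exp C) ^ ℓ := by rw [← mul_pow]
  -- combine into B^ℓ
  set X : ℝ := ((L:ℝ) * Real.log L / ℓ) ^ (κ+1) with hXdef
  have hXnn : 0 ≤ X := Real.rpow_nonneg (by positivity) _
  set B : ℝ := ((L:ℝ)/ℓ * Real.exp 1) * (θ * ((L:ℝ)^γ)⁻¹) * (D * X * Real.exp C) with hBdef
  have hBnn : 0 ≤ B := by
    have h1 : (0:ℝ) ≤ ((L:ℝ)^γ)⁻¹ := by positivity
    have h2 : (0:ℝ) ≤ (L:ℝ)/ℓ := by positivity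
    positivity
  have hT : (L.choose ℓ : ℝ) * (θ ^ ℓ / (L:ℝ) ^ ((ℓ:ℝ) * γ)) * ∑ n ∈ range (N L + 1), Acomp κ ℓ n
      ≤ B ^ ℓ := by
    rw [hBdef, mul_pow, mul_pow]
    have hs : 0 ≤ ∑ n ∈ range (N L + 1), Acomp κ ℓ n :=
      Finset.sum_nonneg fun n _ => Acomp_nonneg κ ℓ n
    apply mul_le_mul
    · rw [hc2]
      apply mul_le_mul_of_nonneg_right hc1 (pow_nonneg (by positivity) ℓ)
    · exact hc3
    · exact hs
    · apply mul_nonneg (pow_nonneg (by positivity) ℓ) (pow_nonneg (by positivity) ℓ)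
  -- bound B
  have hLℓpos : (0:ℝ) < (L:ℝ)/ℓ := by positivity
  have hXsplit : X = ((L:ℝ)/ℓ) ^ (κ+1) * (Real.log L) ^ (κ+1) := by
    rw [hXdef, show (L:ℝ) * Real.log L / ℓ = ((L:ℝ)/ℓ) * Real.log L by ring,
      Real.mul_rpow hLℓpos.le hlogpos.le]
  have hfac1 : ((L:ℝ)/ℓ) * ((L:ℝ)/ℓ) ^ (κ+1) = ((L:ℝ)/ℓ) ^ (κ+2) := by
    rw [eq_comm, show κ + 2 = 1 + (κ+1) by ring, Real.rpow_add hLℓpos, Real.rpow_one]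
  have hfac2 : ((L:ℝ)/ℓ) ^ (κ+2) ≤ (L:ℝ) ^ (γ/2) := by
    have hstep : (L:ℝ)/ℓ ≤ (L:ℝ) ^ a := by
      have hdiv : (L:ℝ)/((L:ℝ)^(1-a)) = (L:ℝ)^a := by
        rw [eq_comm, eq_div_iff (ne_of_gt hpow_pos), ← Real.rpow_add hLpos,
          show a + (1-a) = 1 by ring, Real.rpow_one]
      calc (L:ℝ)/ℓ ≤ (L:ℝ)/((L:ℝ)^(1-a)) := by gcongr
        _ = (L:ℝ)^a := hdiv
    calc ((L:ℝ)/ℓ) ^ (κ+2) ≤ ((L:ℝ)^a) ^ (κ+2) :=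
          Real.rpow_le_rpow hLℓpos.le hstep hκ2.le
      _ = (L:ℝ) ^ (a*(κ+2)) := by rw [← Real.rpow_mul hLpos.le]
      _ = (L:ℝ) ^ (γ/2) := by
          congr 1
          rw [hadef]
          field_simp
  have hfac3 : (Real.log L) ^ (κ+1) ≤ δ⁻¹ ^ k * (L:ℝ) ^ (γ/32) := by
    have h1 : (Real.log L) ^ (κ+1) ≤ (Real.log L) ^ ((k:ℕ):ℝ) :=
      Real.rpow_le_rpow_of_exponent_le (by linarith) hkr
    have h2 : (Real.log L) ^ ((k:ℕ):ℝ) = (Real.log L) ^ (k:ℕ) := Real.rpow_natCast _ _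
    have h3 : Real.log L ≤ δ⁻¹ * (L:ℝ) ^ δ := by
      have := Real.log_le_rpow_div hLpos.le hδ
      rw [div_eq_inv_mul] at this
      exact this
    have h4 : (Real.log L) ^ (k:ℕ) ≤ (δ⁻¹ * (L:ℝ) ^ δ) ^ (k:ℕ) :=
      pow_le_pow_left₀ hlogpos.le h3 k
    have h5 : (δ⁻¹ * (L:ℝ) ^ δ) ^ (k:ℕ) = δ⁻¹ ^ k * (L:ℝ) ^ (δ * k) := by
      rw [mul_pow, ← Real.rpow_natCast ((L:ℝ)^δ) k, ← Real.rpow_mul hLpos.le]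
    have h6 : δ * (k:ℝ) = γ/32 := by
      rw [hδdef]
      field_simp
    calc (Real.log L) ^ (κ+1) ≤ (Real.log L) ^ (k:ℕ) := h1.trans_eq h2
      _ ≤ δ⁻¹ ^ k * (L:ℝ) ^ (δ * k) := h4.trans_eq h5
      _ = δ⁻¹ ^ k * (L:ℝ) ^ (γ/32) := by rw [h6]
  have hBle : B ≤ (L:ℝ) ^ (-(γ/2) + γ/8) := by
    have hBeq : B = (Real.exp 1 * θ * D * Real.exp C)
        * (((L:ℝ)/ℓ) * ((L:ℝ)/ℓ) ^ (κ+1)) * ((Real.log L) ^ (κ+1)) * ((L:ℝ)^γ)⁻¹ := by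
      rw [hBdef, hXsplit]; ring
    have hinv : ((L:ℝ)^γ)⁻¹ = (L:ℝ) ^ (-γ) := (Real.rpow_neg hLpos.le γ).symm
    have hKnn : (0:ℝ) ≤ Real.exp 1 * θ * D * Real.exp C :=
      mul_nonneg (mul_nonneg (mul_nonneg (Real.exp_pos 1).le hθ.le) hD.le) (Real.exp_pos C).le
    calc B = (Real.exp 1 * θ * D * Real.exp C)
          * (((L:ℝ)/ℓ) ^ (κ+2)) * ((Real.log L) ^ (κ+1)) * ((L:ℝ)^γ)⁻¹ := by
          rw [hBeq, hfac1]
      _ ≤ (Real.exp 1 * θ * D * Real.exp C)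
          * ((L:ℝ) ^ (γ/2)) * (δ⁻¹ ^ k * (L:ℝ) ^ (γ/32)) * ((L:ℝ)^γ)⁻¹ := by
          have hlognn : (0:ℝ) ≤ (Real.log L) ^ (κ+1) := Real.rpow_nonneg hlogpos.le _
          have hinvnn : (0:ℝ) ≤ ((L:ℝ)^γ)⁻¹ := by positivity
          apply mul_le_mul_of_nonneg_right _ hinvnn
          exact mul_le_mul (mul_le_mul_of_nonneg_left hfac2 hKnn) hfac3 hlognn
            (mul_nonneg hKnn (Real.rpow_nonneg hLpos.le _))
      _ = Kc κ γ θ C * ((L:ℝ) ^ (γ/2) * (L:ℝ) ^ (γ/32) * (L:ℝ) ^ (-γ)) := by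
          rw [hinv, Kc, ← hDdef, ← hkdef, ← hδdef]; ring
      _ = Kc κ γ θ C * (L:ℝ) ^ (γ/2 + γ/32 + -γ) := by
          rw [← Real.rpow_add hLpos, ← Real.rpow_add hLpos]
      _ ≤ (L:ℝ) ^ (γ/32) * (L:ℝ) ^ (γ/2 + γ/32 + -γ) := by
          apply mul_le_mul_of_nonneg_right hK (Real.rpow_nonneg hLpos.le _)
      _ = (L:ℝ) ^ (γ/32 + (γ/2 + γ/32 + -γ)) := by rw [← Real.rpow_add hLpos]
      _ ≤ (L:ℝ) ^ (-(γ/2) + γ/8) := by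
          apply Real.rpow_le_rpow_of_exponent_le hL1r
          linarith
  calc (L.choose ℓ : ℝ) * (θ ^ ℓ / (L:ℝ) ^ ((ℓ:ℝ) * γ)) * ∑ n ∈ range (N L + 1), Acomp κ ℓ n
      ≤ B ^ ℓ := hT
    _ ≤ ((L:ℝ) ^ (-(γ/2) + γ/8)) ^ ℓ := pow_le_pow_left₀ hBnn hBle ℓ
    _ = (L:ℝ) ^ ((-γ/2 + γ/8) * ℓ) := by
        rw [← Real.rpow_natCast ((L:ℝ) ^ (-(γ/2) + γ/8)) ℓ, ← Real.rpow_mul hLpos.le]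
        congr 1
        ring

theorem tail_bound_large_ell (κ γ θ C : ℝ)
    (hκ : -1 < κ) (hγ : 0 < γ) (hγκ : γ < κ + 2) (hθ : 0 < θ) (hC : 0 < C)
    (N : ℕ → ℕ) (hN : ∀ L : ℕ, (N L : ℝ) ≤ C * L) :
    (∃ Cκ : ℝ, 0 < Cκ ∧ ∃ L₁ : ℕ, ∀ L : ℕ, L₁ ≤ L →
      ∀ ℓ ∈ Finset.Icc 1 L,
        ∑ n ∈ Finset.range (N L + 1), Acomp κ ℓ n
          ≤ Cκ ^ ℓ * ((L : ℝ) * Real.log L / ℓ) ^ ((κ + 1) * ℓ)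
              * Real.exp (C * ℓ / Real.log L) * (N L + 1)) ∧
    ∃ ε : ℝ, 0 < ε ∧ ε < γ / 4 ∧
      (∃ L₀ : ℕ, ∀ L : ℕ, L₀ ≤ L →
        tailSum κ γ θ N L
          ≤ ∑ ℓ ∈ Finset.Icc ⌈(L : ℝ) ^ (1 - γ / (2 * (κ + 2)))⌉₊ L,
              (L : ℝ) ^ ((-γ / 2 + ε) * ℓ)) ∧
      Tendsto (tailSum κ γ θ N) atTop (nhds 0) := by
  have hκ2 : (0:ℝ) < κ + 2 := by linarith
  constructor
  · -- Part 1
    refine ⟨zC κ * 2 ^ (κ+1), mul_pos (zC_pos hκ) (Real.rpow_pos_of_pos (by norm_num) _), 8,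
      fun L hL8 ℓ hℓ => ?_⟩
    rw [Finset.mem_Icc] at hℓ
    obtain ⟨hℓ1, hℓL⟩ := hℓ
    have hL1 : 1 ≤ L := by omega
    have hLpos : (0:ℝ) < (L:ℝ) := by exact_mod_cast hL1
    have hlog2 : 2 ≤ Real.log L := log_ge_two hL8
    have hℓpos : (0:ℝ) < (ℓ:ℝ) := by exact_mod_cast hℓ1
    have hxnn : (0:ℝ) ≤ (L:ℝ) * Real.log L / ℓ := by
      apply div_nonneg _ hℓpos.le
      apply mul_nonneg hLpos.le (by linarith)
    have hcore := core_bound κ C hκ hC (hN L) hlog2 hL1 hℓ1 hℓL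
    have hrw : (zC κ * 2 ^ (κ+1) * ((L:ℝ) * Real.log L / ℓ) ^ (κ+1)) ^ ℓ
        = (zC κ * 2 ^ (κ+1)) ^ ℓ * ((L:ℝ) * Real.log L / ℓ) ^ ((κ+1) * ℓ) := by
      rw [mul_pow]
      congr 1
      rw [← Real.rpow_natCast (((L:ℝ) * Real.log L / ℓ) ^ (κ+1)) ℓ,
        ← Real.rpow_mul hxnn]
    have hN1 : (1:ℝ) ≤ (N L : ℝ) + 1 := by
      have : (0:ℝ) ≤ (N L : ℝ) := Nat.cast_nonneg _
      linarith
    have hbnd := hcore.trans_eq (by rw [hrw])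
    calc ∑ n ∈ Finset.range (N L + 1), Acomp κ ℓ n
        ≤ (zC κ * 2 ^ (κ+1)) ^ ℓ * ((L:ℝ) * Real.log L / ℓ) ^ ((κ+1) * ℓ)
            * Real.exp (C * ℓ / Real.log L) := hbnd
      _ ≤ (zC κ * 2 ^ (κ+1)) ^ ℓ * ((L:ℝ) * Real.log L / ℓ) ^ ((κ+1) * ℓ)
            * Real.exp (C * ℓ / Real.log L) * ((N L : ℝ) + 1) := by
          nth_rewrite 1 [← mul_one ((zC κ * 2 ^ (κ+1)) ^ ℓ * ((L:ℝ) * Real.log L / ℓ) ^ ((κ+1) * ℓ)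
            * Real.exp (C * ℓ / Real.log L))]
          apply mul_le_mul_of_nonneg_left hN1
          have h1 : (0:ℝ) ≤ (zC κ * 2 ^ (κ+1)) ^ ℓ :=
            pow_nonneg (mul_nonneg (zC_pos hκ).le (Real.rpow_nonneg (by norm_num) _)) ℓ
          have h2 : (0:ℝ) ≤ ((L:ℝ) * Real.log L / ℓ) ^ ((κ+1) * ℓ) := Real.rpow_nonneg hxnn _
          positivity
  · -- Part 2
    set a : ℝ := γ / (2*(κ+2)) with hadef
    have ha0 : 0 < a := by positivity
    have ha1 : a < 1/2 := by
      rw [hadef, div_lt_iff₀ (by positivity)]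
      nlinarith
    set k₂ : ℕ := ⌈16/(3*γ)⌉₊ + 1 with hk₂def
    have hk₂r : 16/(3*γ) ≤ (k₂:ℝ) := by
      calc 16/(3*γ) ≤ (⌈16/(3*γ)⌉₊:ℝ) := Nat.le_ceil _
        _ ≤ (k₂:ℝ) := by exact_mod_cast Nat.le_succ _
    -- eventual conditions
    have hev1 : ∀ᶠ L : ℕ in atTop, 8 ≤ L := eventually_ge_atTop 8
    have hrt : Tendsto (fun L : ℕ => (L:ℝ) ^ (γ/32)) atTop atTop :=
      (tendsto_rpow_atTop (by positivity)).comp tendsto_natCast_atTop_atTop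
    have hev2 : ∀ᶠ L : ℕ in atTop, Kc κ γ θ C ≤ (L:ℝ) ^ (γ/32) :=
      hrt.eventually_ge_atTop _
    have hrt2 : Tendsto (fun L : ℕ => (L:ℝ) ^ (1-a)) atTop atTop :=
      (tendsto_rpow_atTop (by linarith)).comp tendsto_natCast_atTop_atTop
    have hev3 : ∀ᶠ L : ℕ in atTop, (k₂:ℝ) ≤ (L:ℝ) ^ (1-a) :=
      hrt2.eventually_ge_atTop _
    obtain ⟨L₀, hL₀⟩ := eventually_atTop.1 ((hev1.and hev2).and hev3)
    have key : ∀ L : ℕ, L₀ ≤ L →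
        tailSum κ γ θ N L
          ≤ ∑ ℓ ∈ Finset.Icc ⌈(L : ℝ) ^ (1 - γ / (2 * (κ + 2)))⌉₊ L,
              (L : ℝ) ^ ((-γ / 2 + γ/8) * ℓ) := by
      intro L hL
      obtain ⟨⟨h8, hK⟩, _⟩ := hL₀ L hL
      apply Finset.sum_le_sum
      intro ℓ hℓ
      exact perterm κ γ θ C hκ hγ hγκ hθ hC N hN h8 hK hℓ
    refine ⟨γ/8, by positivity, by linarith, ⟨L₀, key⟩, ?_⟩
    -- tendsto
    have hnonneg : ∀ L : ℕ, 0 ≤ tailSum κ γ θ N L := by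
      intro L
      apply Finset.sum_nonneg
      intro ℓ _
      apply mul_nonneg
      apply mul_nonneg (Nat.cast_nonneg _)
      · exact div_nonneg (pow_nonneg hθ.le ℓ) (Real.rpow_nonneg (Nat.cast_nonneg L) _)
      · exact Finset.sum_nonneg fun n _ => Acomp_nonneg κ ℓ n
    apply squeeze_zero' (Eventually.of_forall hnonneg) _
      (tendsto_const_div_atTop_nhds_zero_nat 2)
    rw [eventually_atTop]
    refine ⟨L₀, fun L hL => ?_⟩
    obtain ⟨⟨h8, hK⟩, hk2⟩ := hL₀ L hL
    have hL1 : 1 ≤ L := by omega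
    have hLpos : (0:ℝ) < (L:ℝ) := by exact_mod_cast hL1
    have hL1r : (1:ℝ) ≤ (L:ℝ) := by exact_mod_cast hL1
    have hterm : ∀ ℓ ∈ Finset.Icc ⌈(L : ℝ) ^ (1 - γ / (2 * (κ + 2)))⌉₊ L,
        (L : ℝ) ^ ((-γ / 2 + γ/8) * ℓ) ≤ ((L:ℝ)^2)⁻¹ := by
      intro ℓ hℓ
      rw [Finset.mem_Icc] at hℓ
      have hℓk : 16/(3*γ) ≤ (ℓ:ℝ) := by
        calc 16/(3*γ) ≤ (k₂:ℝ) := hk₂r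
          _ ≤ (L:ℝ) ^ (1-a) := hk2
          _ ≤ (⌈(L:ℝ) ^ (1-a)⌉₊ : ℝ) := Nat.le_ceil _
          _ ≤ (ℓ:ℝ) := by exact_mod_cast hℓ.1
      have hexp : (-γ/2 + γ/8) * (ℓ:ℝ) ≤ -2 := by
        have h1 : 3*γ*(ℓ:ℝ) ≥ 16 := by
          have := mul_le_mul_of_nonneg_left hℓk (by positivity : (0:ℝ) ≤ 3*γ)
          rw [mul_div_cancel₀ _ (by positivity : (3:ℝ)*γ ≠ 0)] at this
          linarith
        nlinarith
      calc (L : ℝ) ^ ((-γ / 2 + γ/8) * ℓ) ≤ (L:ℝ) ^ (-2:ℝ) :=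
            Real.rpow_le_rpow_of_exponent_le hL1r hexp
        _ = ((L:ℝ)^2)⁻¹ := by
            rw [Real.rpow_neg hLpos.le, Real.rpow_two]
    calc tailSum κ γ θ N L
        ≤ ∑ ℓ ∈ Finset.Icc ⌈(L : ℝ) ^ (1 - γ / (2 * (κ + 2)))⌉₊ L,
            (L : ℝ) ^ ((-γ / 2 + γ/8) * ℓ) := key L hL
      _ ≤ (Finset.Icc ⌈(L : ℝ) ^ (1 - γ / (2 * (κ + 2)))⌉₊ L).card • ((L:ℝ)^2)⁻¹ :=
          Finset.sum_le_card_nsmul _ _ _ hterm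
      _ ≤ ((L:ℝ)+1) * ((L:ℝ)^2)⁻¹ := by
          rw [nsmul_eq_mul]
          apply mul_le_mul_of_nonneg_right _ (by positivity)
          have : (Finset.Icc ⌈(L : ℝ) ^ (1 - γ / (2 * (κ + 2)))⌉₊ L).card ≤ L + 1 := by
            rw [Nat.card_Icc]
            omega
          calc ((Finset.Icc ⌈(L : ℝ) ^ (1 - γ / (2 * (κ + 2)))⌉₊ L).card : ℝ)
              ≤ ((L+1 : ℕ) : ℝ) := by exact_mod_cast this
            _ = (L:ℝ)+1 := by push_cast; ring
      _ ≤ 2/(L:ℝ) := by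
          rw [div_eq_mul_inv, show ((L:ℝ)^2)⁻¹ = (L:ℝ)⁻¹ * (L:ℝ)⁻¹ by
            rw [sq, mul_inv]]
          have hinv : (0:ℝ) < (L:ℝ)⁻¹ := by positivity
          have h2 : ((L:ℝ)+1) * (L:ℝ)⁻¹ ≤ 2 := by
            rw [add_mul, mul_inv_cancel₀ hLpos.ne']
            have : (L:ℝ)⁻¹ ≤ 1 := by
              rw [inv_le_one_iff₀]; right; exact hL1r
            linarith
          calc ((L:ℝ)+1) * ((L:ℝ)⁻¹ * (L:ℝ)⁻¹) = (((L:ℝ)+1) * (L:ℝ)⁻¹) * (L:ℝ)⁻¹ := by ring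
            _ ≤ 2 * (L:ℝ)⁻¹ := mul_le_mul_of_nonneg_right h2 hinv.le
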